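/- Let T be a unit equilateral triangle centered at the origin o, K convex with T ⊆ K ⊆ −2T, and 0 < η ≤ 10⁻⁹. Then for every k ∈ K with k = λk' for some k' ∈ ∂K and λ ≥ 1/5, the closed ball B((1−η)k, η/100) is contained in (1−η/2)⁻¹(1−η)·K, provided every point of ∂K is (60°, 1/2)-bisecting. -/

import Mathlib

open Pointwise Real EuclideanGeometry
open scoped RealInnerProductSpace

local notation "E2" => EuclideanSpace ℝ (Fin 2)

lemma span_pair_all (u v : E2)
    (h : ∀ a b : ℝ, a • u + b • v = 0 → a = 0 ∧ b = 0) (x : E2) :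
    ∃ a b : ℝ, a • u + b • v = x := by
  have hind : LinearIndependent ℝ ![u, v] := LinearIndependent.pair_iff.mpr h
  have hr : Set.range ![u, v] = {u, v} := by
    simp [Matrix.range_cons, Matrix.range_empty, Set.pair_comm]
  have hfin : Submodule.span ℝ ({u, v} : Set E2) = ⊤ := by
    apply Submodule.eq_top_of_finrank_eq
    rw [← hr, finrank_span_eq_card hind, finrank_euclideanSpace_fin]
    simp
  have : x ∈ Submodule.span ℝ ({u, v} : Set E2) := by rw [hfin]; trivial
  exact Submodule.mem_span_pair.mp this

lemma combo3_mem_convexHull (p q r : E2) {a b c : ℝ}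
    (ha : 0 ≤ a) (hb : 0 ≤ b) (hc : 0 ≤ c) (habc : a + b + c = 1) :
    a • p + b • q + c • r ∈ convexHull ℝ ({p, q, r} : Set E2) := by
  have h := (convex_convexHull ℝ ({p, q, r} : Set E2)).sum_mem (t := Finset.univ)
    (w := ![a, b, c]) (z := ![p, q, r]) ?_ ?_ ?_
  · simpa [Fin.sum_univ_three, add_assoc] using h
  · intro i _; fin_cases i <;> simpa
  · simp [Fin.sum_univ_three]; linarith
  · intro i _; fin_cases i <;> exact subset_convexHull ℝ _ (by simp)

lemma ball_combo {K : Set E2} (hK : Convex ℝ K)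
    {c₁ c₂ : E2} {r₁ r₂ t : ℝ} (hr₁ : 0 ≤ r₁) (hr₂ : 0 ≤ r₂)
    (h₁ : Metric.closedBall c₁ r₁ ⊆ K) (h₂ : Metric.closedBall c₂ r₂ ⊆ K)
    (ht0 : 0 ≤ t) (ht1 : t ≤ 1) :
    Metric.closedBall (t • c₁ + (1 - t) • c₂) (t * r₁ + (1 - t) * r₂) ⊆ K := by
  intro z hz
  rw [Metric.mem_closedBall, dist_eq_norm] at hz
  set w := z - (t • c₁ + (1 - t) • c₂) with hw
  set R := t * r₁ + (1 - t) * r₂ with hR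
  have hRnn : 0 ≤ R := by
    have := mul_nonneg ht0 hr₁
    have := mul_nonneg (by linarith : (0:ℝ) ≤ 1 - t) hr₂
    rw [hR]; linarith
  have hc₁K : c₁ ∈ K := h₁ (Metric.mem_closedBall_self hr₁)
  have hc₂K : c₂ ∈ K := h₂ (Metric.mem_closedBall_self hr₂)
  rcases eq_or_lt_of_le hRnn with hR0 | hR0
  · have hw0 : w = 0 := by
      have h0 : ‖w‖ ≤ 0 := by linarith
      simpa using le_antisymm h0 (norm_nonneg w)
    have hz' : z = t • c₁ + (1 - t) • c₂ := by
      have := hw ▸ hw0; rwa [sub_eq_zero] at this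
    rw [hz']
    exact hK hc₁K hc₂K ht0 (by linarith) (by ring)
  · set z₁ := c₁ + (r₁ / R) • w with hz₁def
    set z₂ := c₂ + (r₂ / R) • w with hz₂def
    have hz₁ : z₁ ∈ K := by
      apply h₁
      rw [Metric.mem_closedBall, dist_eq_norm]
      have h1 : z₁ - c₁ = (r₁ / R) • w := by rw [hz₁def]; abel
      rw [h1, norm_smul, Real.norm_of_nonneg (by positivity)]
      calc r₁ / R * ‖w‖ ≤ r₁ / R * R := by
            apply mul_le_mul_of_nonneg_left hz (by positivity)
        _ = r₁ := by field_simp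
    have hz₂ : z₂ ∈ K := by
      apply h₂
      rw [Metric.mem_closedBall, dist_eq_norm]
      have h1 : z₂ - c₂ = (r₂ / R) • w := by rw [hz₂def]; abel
      rw [h1, norm_smul, Real.norm_of_nonneg (by positivity)]
      calc r₂ / R * ‖w‖ ≤ r₂ / R * R := by
            apply mul_le_mul_of_nonneg_left hz (by positivity)
        _ = r₂ := by field_simp
    have hcoef : t * (r₁ / R) + (1 - t) * (r₂ / R) = 1 := by
      field_simp
      exact hR.symm
    have key : t • z₁ + (1 - t) • z₂
        = (t • c₁ + (1 - t) • c₂) + (t * (r₁ / R) + (1 - t) * (r₂ / R)) • w := by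
      rw [hz₁def, hz₂def]; module
    have hzz : t • z₁ + (1 - t) • z₂ = z := by
      rw [key, hcoef, one_smul, hw]; abel
    rw [← hzz]
    exact hK hz₁ hz₂ ht0 (by linarith) (by ring)

lemma inner_of_angle (x y : E2) (hx : ‖x‖ ≠ 0) (hy : ‖y‖ ≠ 0) {θ : ℝ}
    (h : InnerProductGeometry.angle x y = θ) :
    ⟪x, y⟫ = Real.cos θ * (‖x‖ * ‖y‖) := by
  have hc := InnerProductGeometry.cos_angle x y
  rw [h] at hc
  rw [hc, div_mul_cancel₀ _ (mul_ne_zero hx hy)]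

set_option maxHeartbeats 1000000 in
lemma ball_subset_triangle (p q r : E2) (hplb : Real.sqrt 3 / 6 ≤ ‖p‖) (hpub : ‖p‖ ≤ 2)
    (hq : ‖q - p‖ = 1 / 2) (hr : ‖r - p‖ = 1 / 2)
    (huv : ⟪q - p, r - p⟫ = (1 / 8 : ℝ))
    (hu0 : ⟪q - p, -p⟫ = Real.sqrt 3 / 4 * ‖p‖)
    (hv0 : ⟪r - p, -p⟫ = Real.sqrt 3 / 4 * ‖p‖)
    {η : ℝ} (hη0 : 0 < η) (hη : η ≤ 1 / 10 ^ 9) :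
    Metric.closedBall ((1 - η / 2) • p) (η * ‖p‖ / 8) ⊆ convexHull ℝ ({p, q, r} : Set E2) := by
  have s3 : Real.sqrt 3 ^ 2 = 3 := Real.sq_sqrt (by norm_num)
  have s3nn : (0:ℝ) ≤ Real.sqrt 3 := Real.sqrt_nonneg 3
  have s3lb : (1.7:ℝ) ≤ Real.sqrt 3 := by nlinarith
  have s3ub : Real.sqrt 3 ≤ 1.8 := by nlinarith
  have hpnn : (0:ℝ) ≤ ‖p‖ := norm_nonneg p
  set u := q - p with hu
  set v := r - p with hv
  have huu : ⟪u, u⟫ = 1 / 4 := by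
    rw [real_inner_self_eq_norm_sq, hq]; norm_num
  have hvv : ⟪v, v⟫ = 1 / 4 := by
    rw [real_inner_self_eq_norm_sq, hr]; norm_num
  have hvu : ⟪v, u⟫ = 1 / 8 := by rw [real_inner_comm]; exact huv
  have hind : ∀ a b : ℝ, a • u + b • v = 0 → a = 0 ∧ b = 0 := by
    intro a b hab
    have h1 : ⟪u, a • u + b • v⟫ = 0 := by rw [hab, inner_zero_right]
    have h2 : ⟪v, a • u + b • v⟫ = 0 := by rw [hab, inner_zero_right]
    rw [inner_add_right, real_inner_smul_right, real_inner_smul_right, huu, huv] at h1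
    rw [inner_add_right, real_inner_smul_right, real_inner_smul_right, hvu, hvv] at h2
    constructor <;> linarith
  obtain ⟨α, β, hαβ⟩ := span_pair_all u v hind (-p)
  have hA : α * (1/4) + β * (1/8) = Real.sqrt 3 / 4 * ‖p‖ := by
    have h1 : ⟪u, α • u + β • v⟫ = ⟪u, -p⟫ := by rw [hαβ]
    rw [inner_add_right, real_inner_smul_right, real_inner_smul_right, huu, huv, hu0] at h1
    linarith [h1]
  have hB : α * (1/8) + β * (1/4) = Real.sqrt 3 / 4 * ‖p‖ := by
    have h1 : ⟪v, α • u + β • v⟫ = ⟪v, -p⟫ := by rw [hαβ]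
    rw [inner_add_right, real_inner_smul_right, real_inner_smul_right, hvu, hvv, hv0] at h1
    linarith [h1]
  have hαval : α = 2 * Real.sqrt 3 * ‖p‖ / 3 := by linarith
  have hβval : β = 2 * Real.sqrt 3 * ‖p‖ / 3 := by linarith
  intro x hx
  rw [Metric.mem_closedBall, dist_eq_norm] at hx
  set e := x - (1 - η / 2) • p with he
  obtain ⟨γ, δ, hγδ⟩ := span_pair_all u v hind e
  have hAe : γ * (1/4) + δ * (1/8) = ⟪u, e⟫ := by
    have h1 : ⟪u, γ • u + δ • v⟫ = ⟪u, e⟫ := by rw [hγδ]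
    rw [inner_add_right, real_inner_smul_right, real_inner_smul_right, huu, huv] at h1
    linarith [h1]
  have hBe : γ * (1/8) + δ * (1/4) = ⟪v, e⟫ := by
    have h1 : ⟪v, γ • u + δ • v⟫ = ⟪v, e⟫ := by rw [hγδ]
    rw [inner_add_right, real_inner_smul_right, real_inner_smul_right, hvu, hvv] at h1
    linarith [h1]
  have hue : |⟪u, e⟫| ≤ η * ‖p‖ / 16 := by
    calc |⟪u, e⟫| ≤ ‖u‖ * ‖e‖ := abs_real_inner_le_norm u e
      _ ≤ (1/2) * (η * ‖p‖ / 8) := by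
          rw [hq]; apply mul_le_mul_of_nonneg_left hx (by norm_num)
      _ = η * ‖p‖ / 16 := by ring
  have hve : |⟪v, e⟫| ≤ η * ‖p‖ / 16 := by
    calc |⟪v, e⟫| ≤ ‖v‖ * ‖e‖ := abs_real_inner_le_norm v e
      _ ≤ (1/2) * (η * ‖p‖ / 8) := by
          rw [hr]; apply mul_le_mul_of_nonneg_left hx (by norm_num)
      _ = η * ‖p‖ / 16 := by ring
  obtain ⟨hue1, hue2⟩ := abs_le.mp hue
  obtain ⟨hve1, hve2⟩ := abs_le.mp hve
  have hγb : |γ| ≤ η * ‖p‖ / 2 := abs_le.mpr ⟨by linarith, by linarith⟩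
  have hδb : |δ| ≤ η * ‖p‖ / 2 := abs_le.mpr ⟨by linarith, by linarith⟩
  obtain ⟨hγ1, hγ2⟩ := abs_le.mp hγb
  obtain ⟨hδ1, hδ2⟩ := abs_le.mp hδb
  set a := η / 2 * α + γ with ha
  set b := η / 2 * β + δ with hb
  have hsqrt_prod : 0 ≤ η * ‖p‖ * (2 * Real.sqrt 3 - 3) :=
    mul_nonneg (mul_nonneg hη0.le hpnn) (by nlinarith)
  have hann : 0 ≤ a := by rw [ha, hαval]; nlinarith
  have hbnn : 0 ≤ b := by rw [hb, hβval]; nlinarith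
  have habs : a + b ≤ 1 := by
    rw [ha, hb, hαval, hβval]
    nlinarith [mul_nonneg hη0.le hpnn]
  have hx_eq : x = (1 - a - b) • p + a • q + b • r := by
    have h1 : (1 - a - b) • p + a • q + b • r = p + a • u + b • v := by
      rw [hu, hv]; module
    have h2 : p + a • u + b • v = p + (η / 2) • (α • u + β • v) + (γ • u + δ • v) := by
      rw [ha, hb]; module
    have h3 : x = (1 - η / 2) • p + e := by rw [he]; abel
    rw [h1, h2, hαβ, hγδ, h3]; module
  rw [hx_eq]
  exact combo3_mem_convexHull p q r (by linarith) hann hbnn (by ring)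

set_option maxHeartbeats 1000000 in
lemma inball_subset (v₁ v₂ v₃ : E2)
    (n1 : ⟪v₁, v₁⟫ = 1 / 3) (n2 : ⟪v₂, v₂⟫ = 1 / 3) (i12 : ⟪v₁, v₂⟫ = -(1 / 6))
    (h3 : v₃ = -v₁ - v₂) :
    Metric.closedBall 0 (Real.sqrt 3 / 6) ⊆ convexHull ℝ ({v₁, v₂, v₃} : Set E2) := by
  have i21 : ⟪v₂, v₁⟫ = -(1/6) := by rw [real_inner_comm]; exact i12
  have hind : ∀ a b : ℝ, a • v₁ + b • v₂ = 0 → a = 0 ∧ b = 0 := by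
    intro a b hab
    have h1 : ⟪v₁, a • v₁ + b • v₂⟫ = 0 := by rw [hab, inner_zero_right]
    have h2 : ⟪v₂, a • v₁ + b • v₂⟫ = 0 := by rw [hab, inner_zero_right]
    rw [inner_add_right, real_inner_smul_right, real_inner_smul_right, n1, i12] at h1
    rw [inner_add_right, real_inner_smul_right, real_inner_smul_right, i21, n2] at h2
    constructor <;> linarith
  intro x hx
  rw [Metric.mem_closedBall, dist_zero_right] at hx
  obtain ⟨s, t, hst⟩ := span_pair_all v₁ v₂ hind x
  have hx2 : ‖x‖ ^ 2 ≤ 1 / 12 := by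
    have s3 : Real.sqrt 3 ^ 2 = 3 := Real.sq_sqrt (by norm_num)
    nlinarith [norm_nonneg x, Real.sqrt_nonneg 3]
  have hq : s ^ 2 / 3 + t ^ 2 / 3 - s * t / 3 ≤ 1 / 12 := by
    have h1 : ⟪s • v₁ + t • v₂, s • v₁ + t • v₂⟫ = ‖x‖ ^ 2 := by
      rw [hst, real_inner_self_eq_norm_sq]
    rw [inner_add_left, inner_add_right, inner_add_right, real_inner_smul_left,
      real_inner_smul_left, real_inner_smul_left, real_inner_smul_left,
      real_inner_smul_right, real_inner_smul_right, real_inner_smul_right,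
      real_inner_smul_right, n1, n2, i12, i21] at h1
    nlinarith [hx2]
  have hsum : s + t ≤ 1 := by nlinarith [sq_nonneg (s - t)]
  have hs1 : -1 ≤ 2 * s - t := by nlinarith [sq_nonneg t]
  have ht1 : -1 ≤ 2 * t - s := by nlinarith [sq_nonneg s]
  have hx_eq : x = (1/3 + 2*s/3 - t/3) • v₁ + (1/3 + 2*t/3 - s/3) • v₂
      + (1/3 - s/3 - t/3) • v₃ := by
    rw [h3, ← hst]; module
  rw [hx_eq]
  exact combo3_mem_convexHull v₁ v₂ v₃ (by linarith) (by linarith) (by linarith) (by ring)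

/-- `p` is `(θ, ℓ)`-bisecting in `K` with respect to the origin. -/
def IsBisecting (K : Set (EuclideanSpace ℝ (Fin 2))) (p : EuclideanSpace ℝ (Fin 2))
    (θ ℓ : ℝ) : Prop :=
  ∃ q r : EuclideanSpace ℝ (Fin 2), dist p q = ℓ ∧ dist p r = ℓ ∧
    EuclideanGeometry.angle q p r = θ ∧
    EuclideanGeometry.angle q p 0 = θ / 2 ∧ EuclideanGeometry.angle r p 0 = θ / 2 ∧
    convexHull ℝ {p, q, r} ⊆ K

set_option maxHeartbeats 1000000 in
/-- For T ⊆ K ⊆ −2T with every boundary point of K (60°, 1/2)-bisecting, 0 < η ≤ 10⁻⁹, and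
k = λk' with k' ∈ ∂K and λ ≥ 1/5, the ball B((1−η)k, η/100) is contained in
((1−η)/(1−η/2))·K. -/
theorem stmt_13 (v₁ v₂ v₃ : EuclideanSpace ℝ (Fin 2))
    (h12 : dist v₁ v₂ = 1) (h23 : dist v₂ v₃ = 1) (h31 : dist v₃ v₁ = 1)
    (hbary : v₁ + v₂ + v₃ = 0)
    (K : Set (EuclideanSpace ℝ (Fin 2))) (hK : Convex ℝ K)
    (hTK : convexHull ℝ {v₁, v₂, v₃} ⊆ K)
    (hKT : K ⊆ (-2 : ℝ) • convexHull ℝ {v₁, v₂, v₃})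
    (hbis : ∀ p ∈ frontier K, IsBisecting K p (π / 3) (1 / 2))
    (η : ℝ) (hη0 : 0 < η) (hη : η ≤ 1 / 10 ^ 9)
    (k k' : EuclideanSpace ℝ (Fin 2)) (lam : ℝ)
    (hk : k ∈ K) (hk' : k' ∈ frontier K) (hkl : k = lam • k') (hlam : 1 / 5 ≤ lam) :
    Metric.closedBall ((1 - η) • k) (η / 100) ⊆ ((1 - η) / (1 - η / 2)) • K := by
  have s3 : Real.sqrt 3 ^ 2 = 3 := Real.sq_sqrt (by norm_num)
  have s3nn : (0:ℝ) ≤ Real.sqrt 3 := Real.sqrt_nonneg 3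
  have s3lb : (1.7:ℝ) ≤ Real.sqrt 3 := by nlinarith
  have s3ub : Real.sqrt 3 ≤ 1.8 := by nlinarith
  -- inner-product data of the triangle vertices
  have e12 : ‖v₁ - v₂‖ = 1 := by rw [← dist_eq_norm]; exact h12
  have e23 : ‖v₂ - v₃‖ = 1 := by rw [← dist_eq_norm]; exact h23
  have e31 : ‖v₃ - v₁‖ = 1 := by rw [← dist_eq_norm]; exact h31
  have q12 : ⟪v₁, v₁⟫ - 2 * ⟪v₁, v₂⟫ + ⟪v₂, v₂⟫ = 1 := by
    have h := norm_sub_sq_real v₁ v₂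
    rw [e12, ← real_inner_self_eq_norm_sq, ← real_inner_self_eq_norm_sq] at h
    simp only [one_pow] at h; linarith
  have q23 : ⟪v₂, v₂⟫ - 2 * ⟪v₂, v₃⟫ + ⟪v₃, v₃⟫ = 1 := by
    have h := norm_sub_sq_real v₂ v₃
    rw [e23, ← real_inner_self_eq_norm_sq, ← real_inner_self_eq_norm_sq] at h
    simp only [one_pow] at h; linarith
  have q31 : ⟪v₃, v₃⟫ - 2 * ⟪v₃, v₁⟫ + ⟪v₁, v₁⟫ = 1 := by
    have h := norm_sub_sq_real v₃ v₁
    rw [e31, ← real_inner_self_eq_norm_sq, ← real_inner_self_eq_norm_sq] at h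
    simp only [one_pow] at h; linarith
  have c12 : ⟪v₂, v₁⟫ = ⟪v₁, v₂⟫ := real_inner_comm v₁ v₂
  have c23 : ⟪v₃, v₂⟫ = ⟪v₂, v₃⟫ := real_inner_comm v₂ v₃
  have c31 : ⟪v₁, v₃⟫ = ⟪v₃, v₁⟫ := real_inner_comm v₃ v₁
  have b1 : ⟪v₁, v₁⟫ + ⟪v₁, v₂⟫ + ⟪v₁, v₃⟫ = 0 := by
    have h : ⟪v₁, v₁ + v₂ + v₃⟫ = 0 := by rw [hbary, inner_zero_right]
    rw [inner_add_right, inner_add_right] at h; linarith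
  have b2 : ⟪v₂, v₁⟫ + ⟪v₂, v₂⟫ + ⟪v₂, v₃⟫ = 0 := by
    have h : ⟪v₂, v₁ + v₂ + v₃⟫ = 0 := by rw [hbary, inner_zero_right]
    rw [inner_add_right, inner_add_right] at h; linarith
  have b3 : ⟪v₃, v₁⟫ + ⟪v₃, v₂⟫ + ⟪v₃, v₃⟫ = 0 := by
    have h : ⟪v₃, v₁ + v₂ + v₃⟫ = 0 := by rw [hbary, inner_zero_right]
    rw [inner_add_right, inner_add_right] at h; linarith
  have n1 : ⟪v₁, v₁⟫ = 1 / 3 := by linarith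
  have n2 : ⟪v₂, v₂⟫ = 1 / 3 := by linarith
  have n3 : ⟪v₃, v₃⟫ = 1 / 3 := by linarith
  have i12 : ⟪v₁, v₂⟫ = -(1 / 6) := by linarith
  have hv3 : v₃ = -v₁ - v₂ := by
    have h := eq_neg_of_add_eq_zero_right hbary
    rw [h]; abel
  -- ball around the origin inside K
  have hball0 : Metric.closedBall (0:E2) (Real.sqrt 3 / 6) ⊆ K :=
    (inball_subset v₁ v₂ v₃ n1 n2 i12 hv3).trans hTK
  have hballint : Metric.ball (0:E2) (Real.sqrt 3 / 6) ⊆ interior K :=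
    interior_maximal (Metric.ball_subset_closedBall.trans hball0) Metric.isOpen_ball
  have h0int : (0:E2) ∈ interior K := hballint (Metric.mem_ball_self (by positivity))
  -- norm bounds on k'
  have hk'lb : Real.sqrt 3 / 6 ≤ ‖k'‖ := by
    by_contra h
    push_neg at h
    exact hk'.2 (hballint (by rwa [Metric.mem_ball, dist_zero_right]))
  have hk'pos : (0:ℝ) < ‖k'‖ := lt_of_lt_of_le (by positivity) hk'lb
  have hvn : ∀ w : E2, ⟪w, w⟫ = 1 / 3 → ‖w‖ ≤ 1 := by
    intro w hw
    have h := real_inner_self_eq_norm_sq w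
    nlinarith [norm_nonneg w]
  have hhull : convexHull ℝ ({v₁, v₂, v₃} : Set E2) ⊆ Metric.closedBall 0 1 := by
    apply convexHull_min _ (convex_closedBall _ _)
    intro w hw
    simp only [Set.mem_insert_iff, Set.mem_singleton_iff] at hw
    rw [Metric.mem_closedBall, dist_zero_right]
    rcases hw with rfl | rfl | rfl
    · exact hvn _ n1
    · exact hvn _ n2
    · exact hvn _ n3
  have hK2 : K ⊆ Metric.closedBall (0:E2) 2 := by
    intro z hz
    obtain ⟨y, hy, hyz⟩ := Set.mem_smul_set.mp (hKT hz)
    have hy1 := hhull hy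
    rw [Metric.mem_closedBall, dist_zero_right] at hy1 ⊢
    rw [← hyz, norm_smul, Real.norm_eq_abs]
    rw [abs_of_nonpos (by norm_num : (-2:ℝ) ≤ 0)]
    nlinarith [norm_nonneg y]
  have hk'ub : ‖k'‖ ≤ 2 := by
    have h1 : k' ∈ closure K := hk'.1
    have h2 : closure K ⊆ Metric.closedBall (0:E2) 2 :=
      (IsClosed.closure_subset_iff Metric.isClosed_closedBall).mpr hK2
    have := h2 h1
    rwa [Metric.mem_closedBall, dist_zero_right] at this
  -- lam ≤ 1
  have hlam0 : (0:ℝ) ≤ lam := by linarith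
  have hlam1 : lam ≤ 1 := by
    by_contra hcon
    push_neg at hcon
    have hlp : (0:ℝ) < lam := by linarith
    have hinv : lam⁻¹ < 1 := by
      rw [← one_div]
      exact (div_lt_one hlp).mpr hcon
    have hk'eq : k' = (1 - lam⁻¹) • (0:E2) + lam⁻¹ • k := by
      rw [hkl, smul_smul, smul_zero, zero_add, inv_mul_cancel₀ (ne_of_gt hlp), one_smul]
    have : k' ∈ interior K := by
      rw [hk'eq]
      exact hK.combo_interior_closure_mem_interior h0int (subset_closure hk)
        (by linarith) (by positivity) (by ring)
    exact hk'.2 this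
  -- the bisecting triangle at k'
  obtain ⟨qq, rr, hdq, hdr, hang, hangq, hangr, hsub⟩ := hbis k' hk'
  have hqn : ‖qq - k'‖ = 1 / 2 := by rw [← dist_eq_norm, dist_comm]; exact hdq
  have hrn : ‖rr - k'‖ = 1 / 2 := by rw [← dist_eq_norm, dist_comm]; exact hdr
  have hqn0 : ‖qq - k'‖ ≠ 0 := by rw [hqn]; norm_num
  have hrn0 : ‖rr - k'‖ ≠ 0 := by rw [hrn]; norm_num
  have hk'n0 : ‖k'‖ ≠ 0 := ne_of_gt hk'pos
  rw [EuclideanGeometry.angle, vsub_eq_sub, vsub_eq_sub] at hang hangq hangr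
  rw [zero_sub] at hangq hangr
  have hhalf : π / 3 / 2 = π / 6 := by ring
  rw [hhalf] at hangq hangr
  have hiqr : ⟪qq - k', rr - k'⟫ = (1 / 8 : ℝ) := by
    have h := inner_of_angle _ _ hqn0 hrn0 hang
    rw [hqn, hrn, Real.cos_pi_div_three] at h
    rw [h]; norm_num
  have hiq0 : ⟪qq - k', -k'⟫ = Real.sqrt 3 / 4 * ‖k'‖ := by
    have h := inner_of_angle _ _ hqn0 (by rwa [norm_neg]) hangq
    rw [hqn, norm_neg, Real.cos_pi_div_six] at h
    rw [h]; ring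
  have hir0 : ⟪rr - k', -k'⟫ = Real.sqrt 3 / 4 * ‖k'‖ := by
    have h := inner_of_angle _ _ hrn0 (by rwa [norm_neg]) hangr
    rw [hrn, norm_neg, Real.cos_pi_div_six] at h
    rw [h]; ring
  have htri : Metric.closedBall ((1 - η / 2) • k') (η * ‖k'‖ / 8) ⊆ K :=
    (ball_subset_triangle k' qq rr hk'lb hk'ub hqn hrn hiqr hiq0 hir0 hη0 hη).trans hsub
  -- combine the two balls
  have hcomb := ball_combo hK (t := lam) (by positivity) (by positivity) htri hball0
    hlam0 hlam1
  have hcen : lam • ((1 - η / 2) • k') + (1 - lam) • (0:E2) = (1 - η / 2) • k := by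
    rw [hkl, smul_zero, add_zero, smul_smul, smul_smul, mul_comm]
  rw [hcen] at hcomb
  -- finish
  intro x hx
  have hη1 : η ≤ 1 / 2 := by norm_num at hη ⊢; linarith
  have hnum : (0:ℝ) < 1 - η := by linarith
  have hden : (0:ℝ) < 1 - η / 2 := by linarith
  have hc : (0:ℝ) < (1 - η) / (1 - η / 2) := div_pos hnum hden
  rw [Set.mem_smul_set_iff_inv_smul_mem₀ (ne_of_gt hc)]
  apply hcomb
  rw [Metric.mem_closedBall]
  have hxd : dist x ((1 - η) • k) ≤ η / 100 := Metric.mem_closedBall.mp hx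
  have hkey : ((1 - η) / (1 - η / 2))⁻¹ • ((1 - η) • k) = (1 - η / 2) • k := by
    rw [smul_smul]
    congr 1
    field_simp
  calc dist (((1 - η) / (1 - η / 2))⁻¹ • x) ((1 - η / 2) • k)
      = dist (((1 - η) / (1 - η / 2))⁻¹ • x) (((1 - η) / (1 - η / 2))⁻¹ • ((1 - η) • k)) := by
        rw [hkey]
    _ = ‖((1 - η) / (1 - η / 2))⁻¹‖ * dist x ((1 - η) • k) := dist_smul₀ _ _ _
    _ ≤ ((1 - η / 2) / (1 - η)) * (η / 100) := by
        rw [Real.norm_eq_abs, abs_of_pos (by positivity), inv_div]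
        exact mul_le_mul_of_nonneg_left hxd (by positivity)
    _ ≤ lam * (η * ‖k'‖ / 8) + (1 - lam) * (Real.sqrt 3 / 6) := by
        have hfrac : (1 - η / 2) / (1 - η) ≤ 2 := by
          rw [div_le_iff₀ hnum]; linarith
        have hL : ((1 - η / 2) / (1 - η)) * (η / 100) ≤ η / 50 := by
          calc ((1 - η / 2) / (1 - η)) * (η / 100) ≤ 2 * (η / 100) :=
                mul_le_mul_of_nonneg_right hfrac (by positivity)
            _ = η / 50 := by ring
        have hEN2 : η * ‖k'‖ ≤ η * 2 := mul_le_mul_of_nonneg_left hk'ub hη0.le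
        have hEN1 : η * (Real.sqrt 3 / 6) ≤ η * ‖k'‖ := mul_le_mul_of_nonneg_left hk'lb hη0.le
        have hs : η * 1.7 ≤ η * Real.sqrt 3 := mul_le_mul_of_nonneg_left s3lb hη0.le
        have hmid : η * ‖k'‖ / 8 ≤ Real.sqrt 3 / 6 := by
          norm_num at hη
          linarith
        have hpos : 0 ≤ (1 - lam) * (Real.sqrt 3 / 6 - η * ‖k'‖ / 8) :=
          mul_nonneg (by linarith) (by linarith)
        linarith [hpos, hEN1, hs, hL]
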